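/- (van der Waerden identity) Let G=(V,E) be a finite graph with n = |V| vertices and m = |E| edges, and for each integer i ≥ 0 let b_i be the number of even subgraphs of G with exactly i edges. Then for every real number K, Σ_{σ: V→{±1}} exp(K · Σ_{uv∈E} σ(u)σ(v)) = 2^n (cosh K)^m · Σ_i b_i (tanh K)^i. -/

import Mathlib

open Finset
open scoped Classical

variable {V : Type*} [Fintype V] [DecidableEq V]

/-- The cut `[S, S̄]`: the set of edges of `G` with one endpoint in `S` and the other
endpoint in `S̄ = V ∖ S`. -/
noncomputable def cutEdges (G : SimpleGraph V) [DecidableRel G.Adj] (S : Finset V) :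
    Finset (Sym2 V) :=
  G.edgeFinset.filter fun e => (∃ a ∈ e, a ∈ S) ∧ (∃ a ∈ e, a ∉ S)

/-- A T-join `(T, A)` in `G`: `A ⊆ E`, every vertex of `T` is incident with an odd number
of edges of `A`, and every vertex outside `T` is incident with an even number of edges
of `A`. -/
def IsTJoin (G : SimpleGraph V) [DecidableRel G.Adj] (T : Finset V)
    (A : Finset (Sym2 V)) : Prop :=
  A ⊆ G.edgeFinset ∧ ∀ v : V, v ∈ T ↔ Odd (A.filter fun e => v ∈ e).card

/-- The product of the spins at the two endpoints of an edge. -/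
noncomputable def edgeProd (σ : V → ℤ) (e : Sym2 V) : ℤ :=
  Sym2.lift ⟨fun u w => σ u * σ w, fun _ _ => mul_comm _ _⟩ e

/-- The energy of `G` in state `σ`: `∑_{uv ∈ E} σ(u) σ(v)`. -/
noncomputable def energy (G : SimpleGraph V) [DecidableRel G.Adj] (σ : V → ℤ) : ℤ :=
  ∑ e ∈ G.edgeFinset, edgeProd σ e

/-- The magnetization of a state: `∑_{v ∈ V} σ(v)`. -/
noncomputable def magnet (σ : V → ℤ) : ℤ := ∑ v : V, σ v

/-- The number of even subgraphs of `G` (edge sets in which every vertex has even degree)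
with exactly `i` edges. -/
noncomputable def evenCount (G : SimpleGraph V) [DecidableRel G.Adj] (i : ℕ) : ℕ :=
  (G.edgeFinset.powerset.filter fun A =>
      A.card = i ∧ ∀ v : V, Even (A.filter fun e => v ∈ e).card).card

/-! ### Auxiliary lemmas -/

lemma vdw_mem_sgn (x : ({1, -1} : Finset ℤ)) : (x : ℤ) = 1 ∨ (x : ℤ) = -1 := by
  rcases Finset.mem_insert.mp x.2 with h | h
  · exact Or.inl h
  · exact Or.inr (Finset.mem_singleton.mp h)

lemma vdw_pow_even_eq_one {x : ℤ} (hx : x = 1 ∨ x = -1) {n : ℕ} (hn : Even n) : x ^ n = 1 := by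
  obtain ⟨k, hk⟩ := hn
  rcases hx with h | h <;> simp [h, hk, ← two_mul, pow_mul]

noncomputable def vdwNeg (x : ({1, -1} : Finset ℤ)) : ({1, -1} : Finset ℤ) :=
  ⟨-(x : ℤ), by rcases vdw_mem_sgn x with h | h <;> simp [h]⟩

lemma vdw_prod_edgeProd (G : SimpleGraph V) [DecidableRel G.Adj] (σ : V → ℤ)
    {A : Finset (Sym2 V)} (hA : A ⊆ G.edgeFinset) :
    ∏ e ∈ A, edgeProd σ e = ∏ v, σ v ^ (A.filter fun e => v ∈ e).card := by
  classical
  induction A using Finset.induction with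
  | empty => simp
  | @insert e A he ih =>
    have heE : e ∈ G.edgeFinset := hA (Finset.mem_insert_self _ _)
    have hA' : A ⊆ G.edgeFinset := fun x hx => hA (Finset.mem_insert_of_mem hx)
    rw [Finset.prod_insert he, ih hA']
    have hcard : ∀ v, ((insert e A).filter fun x => v ∈ x).card
        = ((A.filter fun x => v ∈ x).card) + (if v ∈ e then 1 else 0) := by
      intro v
      rw [Finset.filter_insert]
      by_cases hv : v ∈ e
      · rw [if_pos hv, if_pos hv,
          Finset.card_insert_of_notMem (fun h => he (Finset.mem_of_mem_filter _ h))]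
      · rw [if_neg hv, if_neg hv, add_zero]
    have hE : edgeProd σ e = ∏ v, σ v ^ (if v ∈ e then 1 else 0) := by
      induction e using Sym2.ind with
      | _ u w =>
        have huw : u ≠ w := by
          have := SimpleGraph.mem_edgeFinset.mp heE
          rw [SimpleGraph.mem_edgeSet] at this
          exact this.ne
        have h1 : ∀ v : V, σ v ^ (if v ∈ (s(u, w) : Sym2 V) then 1 else 0)
            = if v ∈ (s(u, w) : Sym2 V) then σ v else 1 := by
          intro v; split <;> simp
        simp_rw [h1]
        rw [← Finset.prod_filter]
        have h2 : Finset.univ.filter (fun v => v ∈ (s(u, w) : Sym2 V)) = {u, w} := by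
          ext v; simp [Sym2.mem_iff]
        rw [h2, Finset.prod_pair huw]
        simp [edgeProd]
    simp_rw [hcard, pow_add, Finset.prod_mul_distrib, hE]
    ring

lemma vdw_sum_sign_pow (d : V → ℕ) :
    ∑ σ : V → ({1, -1} : Finset ℤ), ∏ v, (σ v : ℤ) ^ d v
      = if ∀ v, Even (d v) then 2 ^ Fintype.card V else 0 := by
  classical
  split
  case isTrue h =>
    have h1 : ∀ σ : V → ({1, -1} : Finset ℤ), ∏ v, (σ v : ℤ) ^ d v = 1 := fun σ =>
      Finset.prod_eq_one fun v _ => vdw_pow_even_eq_one (vdw_mem_sgn (σ v)) (h v)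
    rw [Finset.sum_congr rfl fun σ _ => h1 σ, Finset.sum_const, Finset.card_univ,
      Fintype.card_fun, Fintype.card_coe]
    have h2 : ({1, -1} : Finset ℤ).card = 2 := by decide
    simp [h2]
  case isFalse h =>
    push_neg at h
    obtain ⟨v0, hv0⟩ := h
    have hodd : Odd (d v0) := Nat.not_even_iff_odd.mp hv0
    refine Finset.sum_involution (fun σ _ => Function.update σ v0 (vdwNeg (σ v0))) ?_ ?_ ?_ ?_
    · intro σ _
      have key : ∏ v, ((Function.update σ v0 (vdwNeg (σ v0)) v : ℤ)) ^ d v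
          = - ∏ v, (σ v : ℤ) ^ d v := by
        rw [← Finset.mul_prod_erase Finset.univ _ (Finset.mem_univ v0),
          ← Finset.mul_prod_erase Finset.univ (fun v => (σ v : ℤ) ^ d v) (Finset.mem_univ v0)]
        have h1 : ∀ v ∈ Finset.univ.erase v0,
            ((Function.update σ v0 (vdwNeg (σ v0)) v : ℤ)) ^ d v = (σ v : ℤ) ^ d v := by
          intro v hv
          rw [Function.update_of_ne (Finset.mem_erase.mp hv).1]
        rw [Finset.prod_congr rfl h1, Function.update_self]
        have h2 : ((vdwNeg (σ v0) : ℤ)) ^ d v0 = -((σ v0 : ℤ) ^ d v0) := by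
          show (-(σ v0 : ℤ)) ^ d v0 = _
          exact Odd.neg_pow hodd _
        rw [h2]; ring
      rw [key]; ring
    · intro σ _ hf heq
      have h1 : Function.update σ v0 (vdwNeg (σ v0)) v0 = σ v0 := by rw [heq]
      rw [Function.update_self] at h1
      have h2 : -(σ v0 : ℤ) = (σ v0 : ℤ) := congrArg Subtype.val h1
      rcases vdw_mem_sgn (σ v0) with h | h <;> omega
    · intro σ _; exact Finset.mem_univ _
    · intro σ _
      funext v
      by_cases hv : v = v0
      · subst hv
        simp [Function.update_self, vdwNeg, Subtype.ext_iff]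
      · simp [Function.update_of_ne hv]

lemma vdw_exp_term (K : ℝ) {p : ℤ} (hp : p = 1 ∨ p = -1) :
    Real.exp (K * (p : ℝ)) = Real.cosh K * ((p : ℝ) * Real.tanh K + 1) := by
  have hc : Real.cosh K ≠ 0 := ne_of_gt (Real.cosh_pos K)
  rcases hp with h | h <;> subst h <;> push_cast <;>
    rw [Real.tanh_eq_sinh_div_cosh] <;> field_simp
  rw [← Real.cosh_add_sinh]
  ring
  rw [← Real.cosh_sub_sinh]
  ring

lemma vdw_term (G : SimpleGraph V) [DecidableRel G.Adj] (K : ℝ)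
    (σ : V → ({1, -1} : Finset ℤ)) :
    Real.exp (K * (energy G fun v => (σ v : ℤ)))
      = Real.cosh K ^ G.edgeFinset.card * ∑ A ∈ G.edgeFinset.powerset,
          ((∏ e ∈ A, edgeProd (fun v => (σ v : ℤ)) e : ℤ) : ℝ) * Real.tanh K ^ A.card := by
  have h1 : K * ((energy G fun v => (σ v : ℤ)) : ℝ)
      = ∑ e ∈ G.edgeFinset, K * ((edgeProd (fun v => (σ v : ℤ)) e : ℤ) : ℝ) := by
    rw [energy]; push_cast; rw [Finset.mul_sum]
  rw [h1, Real.exp_sum]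
  have hp : ∀ e, edgeProd (fun v => (σ v : ℤ)) e = 1 ∨ edgeProd (fun v => (σ v : ℤ)) e = -1 := by
    intro e
    induction e using Sym2.ind with
    | _ u w =>
      rcases vdw_mem_sgn (σ u) with h | h <;> rcases vdw_mem_sgn (σ w) with h' | h' <;>
        simp [edgeProd, h, h']
  calc ∏ e ∈ G.edgeFinset, Real.exp (K * ((edgeProd (fun v => (σ v : ℤ)) e : ℤ) : ℝ))
      = ∏ e ∈ G.edgeFinset, (Real.cosh K *
          (((edgeProd (fun v => (σ v : ℤ)) e : ℤ) : ℝ) * Real.tanh K + 1)) :=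
        Finset.prod_congr rfl fun e _ => vdw_exp_term K (hp e)
    _ = Real.cosh K ^ G.edgeFinset.card * ∏ e ∈ G.edgeFinset,
          (((edgeProd (fun v => (σ v : ℤ)) e : ℤ) : ℝ) * Real.tanh K + 1) := by
        rw [Finset.prod_mul_distrib, Finset.prod_const]
    _ = _ := by
        congr 1
        rw [Finset.prod_add]
        refine Finset.sum_congr rfl fun A hA => ?_
        rw [Finset.prod_const_one, mul_one, Finset.prod_mul_distrib, Finset.prod_const]
        push_cast
        ring

/-- **van der Waerden identity.**
`Σ_σ exp(K · E(G,σ)) = 2^n (cosh K)^m Σ_i b_i (tanh K)^i`, where `b_i` is the number of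
even subgraphs of `G` with exactly `i` edges. -/
theorem van_der_waerden (G : SimpleGraph V) [DecidableRel G.Adj] (K : ℝ) :
    ∑ σ : V → ({1, -1} : Finset ℤ),
        Real.exp (K * (energy G fun v => (σ v : ℤ)))
      = 2 ^ Fintype.card V * Real.cosh K ^ G.edgeFinset.card *
          ∑ i ∈ Finset.range (G.edgeFinset.card + 1),
            (evenCount G i : ℝ) * Real.tanh K ^ i := by
  classical
  rw [Finset.sum_congr rfl fun σ _ => vdw_term G K σ, ← Finset.mul_sum, Finset.sum_comm]
  have hA : ∀ A ∈ G.edgeFinset.powerset,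
      (∑ σ : V → ({1, -1} : Finset ℤ),
          ((∏ e ∈ A, edgeProd (fun v => (σ v : ℤ)) e : ℤ) : ℝ) * Real.tanh K ^ A.card)
        = (if ∀ v, Even ((A.filter fun e => v ∈ e).card) then ((2 : ℝ) ^ Fintype.card V)
            else 0) * Real.tanh K ^ A.card := by
    intro A hAmem
    rw [← Finset.sum_mul]
    congr 1
    have hsub : A ⊆ G.edgeFinset := Finset.mem_powerset.mp hAmem
    have hz : (∑ σ : V → ({1, -1} : Finset ℤ), ∏ e ∈ A, edgeProd (fun v => (σ v : ℤ)) e)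
        = if ∀ v, Even ((A.filter fun e => v ∈ e).card) then (2 : ℤ) ^ Fintype.card V
            else 0 := by
      rw [Finset.sum_congr rfl fun σ _ => vdw_prod_edgeProd G _ hsub]
      exact vdw_sum_sign_pow _
    calc (∑ σ : V → ({1, -1} : Finset ℤ),
            ((∏ e ∈ A, edgeProd (fun v => (σ v : ℤ)) e : ℤ) : ℝ))
        = ((∑ σ : V → ({1, -1} : Finset ℤ),
            ∏ e ∈ A, edgeProd (fun v => (σ v : ℤ)) e : ℤ) : ℝ) := by push_cast; rfl
      _ = _ := by rw [hz]; split <;> push_cast <;> rfl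
  rw [Finset.sum_congr rfl hA]
  simp_rw [ite_mul, zero_mul]
  rw [← Finset.sum_filter, ← Finset.mul_sum]
  have hgroup : (∑ A ∈ G.edgeFinset.powerset.filter
        (fun A => ∀ v, Even ((A.filter fun e => v ∈ e).card)), Real.tanh K ^ A.card)
      = ∑ i ∈ Finset.range (G.edgeFinset.card + 1), (evenCount G i : ℝ) * Real.tanh K ^ i := by
    have hmaps : ∀ A ∈ G.edgeFinset.powerset.filter
        (fun A => ∀ v, Even ((A.filter fun e => v ∈ e).card)),
        A.card ∈ Finset.range (G.edgeFinset.card + 1) := by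
      intro A hAmem
      rw [Finset.mem_range, Nat.lt_succ_iff]
      exact Finset.card_le_card (Finset.mem_powerset.mp (Finset.mem_filter.mp hAmem).1)
    rw [← Finset.sum_fiberwise_of_maps_to hmaps]
    refine Finset.sum_congr rfl fun i _ => ?_
    have hfib : (G.edgeFinset.powerset.filter
          (fun A => ∀ v, Even ((A.filter fun e => v ∈ e).card))).filter
          (fun A => A.card = i)
        = G.edgeFinset.powerset.filter fun A =>
            A.card = i ∧ ∀ v : V, Even (A.filter fun e => v ∈ e).card := by
      ext A
      simp only [Finset.mem_filter]
      tauto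
    rw [Finset.sum_congr rfl (fun A hAmem => by
        rw [(Finset.mem_filter.mp hAmem).2]), Finset.sum_const, hfib, nsmul_eq_mul]
    rfl
  rw [hgroup]
  ring
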